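/- arXiv:2505.02970 — 5 statements merged into one kernel-verified Lean document; each statement's English description precedes it below -/
import Mathlib

section
/- Let P be a symmetric positive semidefinite n×n real matrix, R a symmetric positive definite m×m real matrix, and B an n×m real matrix. Then P ⪰ P - P B (R + Bᵀ P B)^{-1} Bᵀ P ⪰ 0, where ⪰ denotes the Loewner order (X ⪰ Y means X - Y is positive semidefinite). In particular R + Bᵀ P B is positive definite and hence invertible. -/
open Matrix
set_option maxHeartbeats 1000000

/-- Let `P` be symmetric positive semidefinite, `R` symmetric positive definite, `B` a real
matrix. Then `R + Bᵀ P B` is positive definite (hence invertible), and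
`P ⪰ P - P B (R + Bᵀ P B)⁻¹ Bᵀ P ⪰ 0` in the Loewner order. -/
theorem stmt3 {n m : ℕ} {P : Matrix (Fin n) (Fin n) ℝ} {R : Matrix (Fin m) (Fin m) ℝ}
    (B : Matrix (Fin n) (Fin m) ℝ) (hP : P.PosSemidef) (hR : R.PosDef) :
    (R + Bᵀ * P * B).PosDef ∧
    (P - (P - P * B * (R + Bᵀ * P * B)⁻¹ * Bᵀ * P)).PosSemidef ∧
    (P - P * B * (R + Bᵀ * P * B)⁻¹ * Bᵀ * P).PosSemidef := by
  have hBt : Bᴴ = Bᵀ := conjTranspose_eq_transpose_of_trivial B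
  have hPBt : (P * B)ᴴ = Bᵀ * P := by
    rw [conjTranspose_mul, hBt, hP.isHermitian.eq]
  have hPt : Pᵀ = P := by
    rw [← conjTranspose_eq_transpose_of_trivial]; exact hP.isHermitian.eq
  have hS : (R + Bᵀ * P * B).PosDef := by
    refine Matrix.PosDef.add_posSemidef hR ?_
    simpa [hBt] using hP.conjTranspose_mul_mul_same B
  haveI : Invertible (R + Bᵀ * P * B) := hS.isUnit.invertible
  refine ⟨hS, ?_, ?_⟩
  · have key := hS.inv.posSemidef.mul_mul_conjTranspose_same (P * B)
    rw [hPBt, ← Matrix.mul_assoc (P * B * (R + Bᵀ * P * B)⁻¹) Bᵀ P] at key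
    rwa [sub_sub_cancel]
  · have hblock : (fromBlocks P (P * B) (P * B)ᴴ (R + Bᵀ * P * B)).PosSemidef := by
      have h1 : (fromBlocks P (P * B) (P * B)ᴴ (Bᵀ * P * B)).PosSemidef := by
        have := hP.conjTranspose_mul_mul_same (fromCols (1 : Matrix (Fin n) (Fin n) ℝ) B)
        rw [conjTranspose_fromCols_eq_fromRows_conjTranspose] at this
        rw [show (fromRows (1 : Matrix (Fin n) (Fin n) ℝ)ᴴ Bᴴ * P) = fromRows (P) (Bᴴ * P) by
          simp [fromRows_mul], fromRows_mul_fromCols] at this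
        simpa [hPBt, hBt, hP.isHermitian.eq, hPt, Matrix.mul_assoc] using this
      have h2 : (fromBlocks (0 : Matrix (Fin n) (Fin n) ℝ) 0 0 R).PosSemidef := by
        have := hR.posSemidef.conjTranspose_mul_mul_same
          (fromCols (0 : Matrix (Fin m) (Fin n) ℝ) (1 : Matrix (Fin m) (Fin m) ℝ))
        rw [conjTranspose_fromCols_eq_fromRows_conjTranspose] at this
        rw [show (fromRows (0 : Matrix (Fin m) (Fin n) ℝ)ᴴ (1 : Matrix (Fin m) (Fin m) ℝ)ᴴ * R)
            = fromRows 0 R by simp [fromRows_mul], fromRows_mul_fromCols] at this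
        simpa using this
      have := h1.add h2
      rwa [fromBlocks_add, add_zero, add_zero, add_zero, add_comm (Bᵀ * P * B) R] at this
    have := (PosDef.fromBlocks₂₂ P (P * B) hS).mp hblock
    rwa [hPBt, ← Matrix.mul_assoc (P * B * (R + Bᵀ * P * B)⁻¹) Bᵀ P] at this
end

section
/- Let P^i, P^j be symmetric positive semidefinite n×n matrices, R symmetric positive definite m×m, A ∈ ℝ^{n×n}, B ∈ ℝ^{n×m}. Define K^s = (R + Bᵀ P^s B)^{-1} Bᵀ P^s A for s ∈ {i,j}, A^j = A - B K^j, and Λ_i = I_n + B R^{-1} Bᵀ P^i. Then K^i - K^j = R^{-1} Bᵀ Λ_i^{-ᵀ} (P^i - P^j) A^j. -/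
open Matrix

/-- With `K^s = (R + Bᵀ P^s B)⁻¹ Bᵀ P^s A`, `A^j = A - B K^j`, and
`Λ_i = I_n + B R⁻¹ Bᵀ P^i`, one has `K^i - K^j = R⁻¹ Bᵀ Λ_i⁻ᵀ (P^i - P^j) A^j`. -/
theorem stmt8 {n m : ℕ} (A : Matrix (Fin n) (Fin n) ℝ) (B : Matrix (Fin n) (Fin m) ℝ)
    {R : Matrix (Fin m) (Fin m) ℝ} {Pi Pj : Matrix (Fin n) (Fin n) ℝ}
    (hR : R.PosDef) (hPi : Pi.PosSemidef) (hPj : Pj.PosSemidef) :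
    (R + Bᵀ * Pi * B)⁻¹ * Bᵀ * Pi * A - (R + Bᵀ * Pj * B)⁻¹ * Bᵀ * Pj * A =
      R⁻¹ * Bᵀ * ((1 + B * R⁻¹ * Bᵀ * Pi)⁻¹)ᵀ * (Pi - Pj) *
        (A - B * ((R + Bᵀ * Pj * B)⁻¹ * Bᵀ * Pj * A)) := by
  have hRd : IsUnit R.det := (Matrix.isUnit_iff_isUnit_det R).mp hR.isUnit
  have hRR : R * R⁻¹ = 1 := mul_nonsing_inv R hRd
  have hRR' : R⁻¹ * R = 1 := nonsing_inv_mul R hRd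
  have hRT : Rᵀ = R := by
    rw [← conjTranspose_eq_transpose_of_trivial]; exact hR.1
  have hRiT : (R⁻¹)ᵀ = R⁻¹ := by rw [transpose_nonsing_inv, hRT]
  have hPiT : Piᵀ = Pi := by
    rw [← conjTranspose_eq_transpose_of_trivial]; exact hPi.1
  have hSi : (R + Bᵀ * Pi * B).PosDef := hR.add_posSemidef (by
    simpa using hPi.conjTranspose_mul_mul_same B)
  have hSj : (R + Bᵀ * Pj * B).PosDef := hR.add_posSemidef (by
    simpa using hPj.conjTranspose_mul_mul_same B)
  have hSid : IsUnit (R + Bᵀ * Pi * B).det := (Matrix.isUnit_iff_isUnit_det _).mp hSi.isUnit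
  have hSjd : IsUnit (R + Bᵀ * Pj * B).det := (Matrix.isUnit_iff_isUnit_det _).mp hSj.isUnit
  set Si := R + Bᵀ * Pi * B with hSidef
  set Sj := R + Bᵀ * Pj * B with hSjdef
  set L := 1 + B * R⁻¹ * Bᵀ * Pi with hLdef
  set Kj := Sj⁻¹ * Bᵀ * Pj * A with hKjdef
  -- invertibility of L
  have hLd : IsUnit L.det := by
    have h1 : L = 1 + B * (R⁻¹ * Bᵀ * Pi) := by
      simp [hLdef, Matrix.mul_assoc]
    have h2 : (1 : Matrix (Fin m) (Fin m) ℝ) + R⁻¹ * Bᵀ * Pi * B = R⁻¹ * Si := by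
      rw [hSidef, Matrix.mul_add, hRR']
      simp [Matrix.mul_assoc]
    have h3 : L.det = (R⁻¹ * Si).det := by
      rw [h1, det_one_add_mul_comm]
      congr 1
    rw [h3, det_mul]
    exact (isUnit_nonsing_inv_det R hRd).mul hSid
  have hLtd : IsUnit (Lᵀ).det := by rw [det_transpose]; exact hLd
  have hLtinv : Lᵀ * (Lᵀ)⁻¹ = 1 := mul_nonsing_inv _ hLtd
  have hLtinv' : (Lᵀ)⁻¹ * Lᵀ = 1 := nonsing_inv_mul _ hLtd
  have hLinv : L * L⁻¹ = 1 := mul_nonsing_inv _ hLd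
  have hLT : Lᵀ = 1 + Pi * (B * (R⁻¹ * Bᵀ)) := by
    rw [hLdef]
    simp [transpose_add, transpose_mul, hRT, hRiT, hPiT, Matrix.mul_assoc]
  -- key 1 : Si⁻¹ * Bᵀ * Pi = R⁻¹ * Bᵀ * (Lᵀ)⁻¹ * Pi
  have e1 : Si * (R⁻¹ * (Bᵀ * Pi)) = Bᵀ * Pi * L := by
    rw [hSidef, hLdef]
    simp only [Matrix.add_mul, Matrix.mul_add, Matrix.mul_one, Matrix.mul_assoc,
      ← Matrix.mul_assoc R R⁻¹, hRR, Matrix.one_mul]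
  have e2 : Lᵀ * Pi = Pi * L := by
    rw [hLT, hLdef]
    simp only [Matrix.add_mul, Matrix.mul_add, Matrix.mul_one, Matrix.one_mul, Matrix.mul_assoc]
  have e2' : Pi * L⁻¹ = (Lᵀ)⁻¹ * Pi := by
    calc Pi * L⁻¹ = (Lᵀ)⁻¹ * (Lᵀ * Pi) * L⁻¹ := by
          rw [← Matrix.mul_assoc, hLtinv', Matrix.one_mul]
      _ = (Lᵀ)⁻¹ * Pi * (L * L⁻¹) := by rw [e2]; simp [Matrix.mul_assoc]
      _ = (Lᵀ)⁻¹ * Pi := by rw [hLinv, Matrix.mul_one]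
  have key1 : Si⁻¹ * Bᵀ * Pi = R⁻¹ * Bᵀ * ((Lᵀ)⁻¹ * Pi) := by
    have : Si⁻¹ * (Si * (R⁻¹ * (Bᵀ * Pi))) * L⁻¹ = Si⁻¹ * (Bᵀ * Pi * L) * L⁻¹ := by rw [e1]
    rw [← Matrix.mul_assoc, ← Matrix.mul_assoc, nonsing_inv_mul Si hSid, Matrix.one_mul] at this
    have h2 : R⁻¹ * (Bᵀ * Pi) * L⁻¹ = Si⁻¹ * (Bᵀ * Pi) := by
      rw [this, Matrix.mul_assoc (Si⁻¹), Matrix.mul_assoc, Matrix.mul_assoc, hLinv, Matrix.mul_one]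
    rw [Matrix.mul_assoc, ← h2, Matrix.mul_assoc, Matrix.mul_assoc, e2']
    simp [Matrix.mul_assoc]
  -- key 2 : Bᵀ * (Pj * Aj) = R * Kj
  set Aj := A - B * Kj with hAjdef
  have hSjKj : Sj * Kj = Bᵀ * Pj * A := by
    rw [hKjdef, ← Matrix.mul_assoc, ← Matrix.mul_assoc, ← Matrix.mul_assoc,
      mul_nonsing_inv Sj hSjd, Matrix.one_mul]
  have key2 : Bᵀ * (Pj * Aj) = R * Kj := by
    have expand : Bᵀ * (Pj * Aj) = Bᵀ * Pj * A - Bᵀ * Pj * B * Kj := by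
      rw [hAjdef]
      simp only [Matrix.mul_sub, Matrix.mul_assoc]
    rw [expand, ← hSjKj, hSjdef]
    simp only [Matrix.add_mul, Matrix.mul_assoc]
    abel
  -- key 3 : (Lᵀ)⁻¹ * (Pi * (B * Kj) + Pj * Aj) = Pj * Aj
  have key3 : (Lᵀ)⁻¹ * (Pi * (B * Kj) + Pj * Aj) = Pj * Aj := by
    have e4 : Lᵀ * (Pj * Aj) = Pi * (B * Kj) + Pj * Aj := by
      rw [hLT]
      have : Pi * (B * (R⁻¹ * Bᵀ)) * (Pj * Aj) = Pi * (B * Kj) := by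
        rw [Matrix.mul_assoc, Matrix.mul_assoc, Matrix.mul_assoc, key2,
          ← Matrix.mul_assoc R⁻¹, hRR', Matrix.one_mul]
      rw [Matrix.add_mul, Matrix.one_mul, this, add_comm]
    rw [← e4, ← Matrix.mul_assoc, hLtinv', Matrix.one_mul]
  -- finish
  rw [transpose_nonsing_inv]
  have lhs1 : Si⁻¹ * Bᵀ * Pi * A = R⁻¹ * Bᵀ * ((Lᵀ)⁻¹ * Pi) * A := by rw [key1]
  have lhs2 : Kj = R⁻¹ * (Bᵀ * ((Lᵀ)⁻¹ * (Pi * (B * Kj) + Pj * Aj))) := by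
    rw [key3, key2, ← Matrix.mul_assoc, hRR', Matrix.one_mul]
  calc Si⁻¹ * Bᵀ * Pi * A - Kj
      = R⁻¹ * Bᵀ * ((Lᵀ)⁻¹ * Pi) * A
        - R⁻¹ * (Bᵀ * ((Lᵀ)⁻¹ * (Pi * (B * Kj) + Pj * Aj))) := by rw [lhs1, ← lhs2]
    _ = R⁻¹ * Bᵀ * (Lᵀ)⁻¹ * (Pi - Pj) * Aj := by
        rw [hAjdef]
        simp only [Matrix.mul_sub, Matrix.sub_mul, Matrix.mul_add, Matrix.add_mul,
          Matrix.mul_assoc]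
        abel
end

section
/- Comparison principle for Riccati difference equations: let {P_i^1} and {P_i^2} be sequences of symmetric positive semidefinite n×n matrices defined by P_{i+1}^j = Aᵀ P_i^j A - Aᵀ P_i^j B (R + Bᵀ P_i^j B)^{-1} Bᵀ P_i^j A + S_i^j, with initial conditions P_0^1 ⪰ P_0^2 ⪰ 0 and cost matrices satisfying S_i^1 ⪰ S_i^2 for all i ∈ ℕ (and S_i^j such that all iterates are positive semidefinite, e.g. S_i^j ⪰ 0). Then P_i^1 ⪰ P_i^2 for all i ∈ ℕ. -/
open Matrix

section helpers

variable {n m : ℕ} {B : Matrix (Fin n) (Fin m) ℝ} {R : Matrix (Fin m) (Fin m) ℝ}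

private lemma M_posdef (hR : R.PosDef) {P : Matrix (Fin n) (Fin n) ℝ} (hP : P.PosSemidef) :
    (R + Bᵀ * P * B).PosDef := by
  have h : (Bᵀ * P * B).PosSemidef := by
    simpa [conjTranspose_eq_transpose_of_trivial] using hP.conjTranspose_mul_mul_same B
  exact hR.add_posSemidef h

private lemma K_fact1 (A : Matrix (Fin n) (Fin n) ℝ) (hR : R.PosDef)
    {P : Matrix (Fin n) (Fin n) ℝ} (hP : P.PosSemidef) :
    (R + Bᵀ * P * B) * ((R + Bᵀ * P * B)⁻¹ * (Bᵀ * P * A)) = Bᵀ * P * A := by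
  have hM : (R + Bᵀ * P * B).PosDef := M_posdef hR hP
  rw [← Matrix.mul_assoc, Matrix.mul_nonsing_inv _ hM.det_pos.ne'.isUnit, Matrix.one_mul]

private lemma K_fact2 (A : Matrix (Fin n) (Fin n) ℝ) (hR : R.PosDef)
    {P : Matrix (Fin n) (Fin n) ℝ} (hP : P.PosSemidef) :
    ((R + Bᵀ * P * B)⁻¹ * (Bᵀ * P * A))ᵀ = Aᵀ * P * B * (R + Bᵀ * P * B)⁻¹ := by
  have hM : (R + Bᵀ * P * B).PosDef := M_posdef hR hP
  have hMt : (R + Bᵀ * P * B)ᵀ = R + Bᵀ * P * B := by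
    have h := hM.isHermitian
    rwa [Matrix.IsHermitian, conjTranspose_eq_transpose_of_trivial] at h
  have hPt : Pᵀ = P := by
    have h := hP.isHermitian
    rwa [Matrix.IsHermitian, conjTranspose_eq_transpose_of_trivial] at h
  rw [transpose_mul, transpose_nonsing_inv, hMt, Matrix.mul_assoc, transpose_mul, transpose_mul,
    transpose_transpose, hPt, Matrix.mul_assoc]

end helpers

section helpers2

variable {n m : ℕ}

private lemma complete_square (A P : Matrix (Fin n) (Fin n) ℝ)
    (B : Matrix (Fin n) (Fin m) ℝ) (R : Matrix (Fin m) (Fin m) ℝ) (K : Matrix (Fin m) (Fin n) ℝ)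
    (h2 : (R + Bᵀ * P * B) * K = Bᵀ * P * A) :
    Aᵀ * P * A - Aᵀ * P * B * K = (A - B * K)ᵀ * P * (A - B * K) + Kᵀ * R * K := by
  calc Aᵀ * P * A - Aᵀ * P * B * K
      = Aᵀ * P * A - Aᵀ * P * B * K - Kᵀ * (Bᵀ * P * A) + Kᵀ * ((R + Bᵀ * P * B) * K) := by
        rw [h2]; abel
    _ = (A - B * K)ᵀ * P * (A - B * K) + Kᵀ * R * K := by
        simp only [transpose_sub, transpose_mul, transpose_transpose, Matrix.sub_mul,
          Matrix.mul_sub, Matrix.add_mul, Matrix.mul_add, Matrix.mul_assoc]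
        abel

end helpers2

section helpers3

variable {n m : ℕ}

private lemma complete_square2 (A Q : Matrix (Fin n) (Fin n) ℝ)
    (B : Matrix (Fin n) (Fin m) ℝ) (R : Matrix (Fin m) (Fin m) ℝ) (K L : Matrix (Fin m) (Fin n) ℝ)
    (hL : (R + Bᵀ * Q * B) * L = Bᵀ * Q * A)
    (hLt : Lᵀ * (R + Bᵀ * Q * B) = Aᵀ * Q * B) :
    (A - B * K)ᵀ * Q * (A - B * K) + Kᵀ * R * K =
      (Aᵀ * Q * A - Aᵀ * Q * B * L) + (K - L)ᵀ * (R + Bᵀ * Q * B) * (K - L) := by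
  calc (A - B * K)ᵀ * Q * (A - B * K) + Kᵀ * R * K
      = (Aᵀ * Q * A - Aᵀ * Q * B * L) +
          (Kᵀ * ((R + Bᵀ * Q * B) * K) - Kᵀ * ((R + Bᵀ * Q * B) * L)
            - Lᵀ * (R + Bᵀ * Q * B) * K + Lᵀ * (R + Bᵀ * Q * B) * L) := by
        rw [hL, hLt]
        simp only [transpose_sub, transpose_mul, transpose_transpose, Matrix.sub_mul,
          Matrix.mul_sub, Matrix.add_mul, Matrix.mul_add, Matrix.mul_assoc]
        abel
    _ = (Aᵀ * Q * A - Aᵀ * Q * B * L) + (K - L)ᵀ * (R + Bᵀ * Q * B) * (K - L) := by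
        simp only [transpose_sub, transpose_mul, transpose_transpose, Matrix.sub_mul,
          Matrix.mul_sub, Matrix.add_mul, Matrix.mul_add, Matrix.mul_assoc]
        abel

variable (A : Matrix (Fin n) (Fin n) ℝ) (B : Matrix (Fin n) (Fin m) ℝ)
  {R : Matrix (Fin m) (Fin m) ℝ}

private lemma assoc_bridge (P : Matrix (Fin n) (Fin n) ℝ) :
    Aᵀ * P * B * (R + Bᵀ * P * B)⁻¹ * Bᵀ * P * A
      = Aᵀ * P * B * ((R + Bᵀ * P * B)⁻¹ * (Bᵀ * P * A)) := by
  simp only [Matrix.mul_assoc]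

private lemma ricPSD (hR : R.PosDef) {P : Matrix (Fin n) (Fin n) ℝ} (hP : P.PosSemidef) :
    (Aᵀ * P * A - Aᵀ * P * B * (R + Bᵀ * P * B)⁻¹ * Bᵀ * P * A).PosSemidef := by
  set K := (R + Bᵀ * P * B)⁻¹ * (Bᵀ * P * A) with hK
  rw [assoc_bridge, ← hK, complete_square A P B R K (K_fact1 A hR hP)]
  have h1 : ((A - B * K)ᵀ * P * (A - B * K)).PosSemidef := by
    simpa [conjTranspose_eq_transpose_of_trivial] using hP.conjTranspose_mul_mul_same (A - B * K)
  have h2 : (Kᵀ * R * K).PosSemidef := by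
    simpa [conjTranspose_eq_transpose_of_trivial] using hR.posSemidef.conjTranspose_mul_mul_same K
  exact h1.add h2

private lemma ricMono (hR : R.PosDef) {P Q : Matrix (Fin n) (Fin n) ℝ}
    (hP : P.PosSemidef) (hQ : Q.PosSemidef) (hPQ : (P - Q).PosSemidef) :
    ((Aᵀ * P * A - Aᵀ * P * B * (R + Bᵀ * P * B)⁻¹ * Bᵀ * P * A)
      - (Aᵀ * Q * A - Aᵀ * Q * B * (R + Bᵀ * Q * B)⁻¹ * Bᵀ * Q * A)).PosSemidef := by
  set K := (R + Bᵀ * P * B)⁻¹ * (Bᵀ * P * A) with hKdef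
  set L := (R + Bᵀ * Q * B)⁻¹ * (Bᵀ * Q * A) with hLdef
  have hLt : Lᵀ * (R + Bᵀ * Q * B) = Aᵀ * Q * B := by
    rw [hLdef, K_fact2 A hR hQ, Matrix.mul_assoc,
      Matrix.nonsing_inv_mul _ (M_posdef hR hQ).det_pos.ne'.isUnit, Matrix.mul_one]
  have key : (Aᵀ * P * A - Aᵀ * P * B * (R + Bᵀ * P * B)⁻¹ * Bᵀ * P * A)
      - (Aᵀ * Q * A - Aᵀ * Q * B * (R + Bᵀ * Q * B)⁻¹ * Bᵀ * Q * A)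
      = (A - B * K)ᵀ * (P - Q) * (A - B * K) + (K - L)ᵀ * (R + Bᵀ * Q * B) * (K - L) := by
    rw [assoc_bridge A B P, ← hKdef, assoc_bridge A B Q, ← hLdef,
      complete_square A P B R K (K_fact1 A hR hP)]
    have h2 := complete_square2 A Q B R K L (K_fact1 A hR hQ) hLt
    have : Aᵀ * Q * A - Aᵀ * Q * B * L
        = (A - B * K)ᵀ * Q * (A - B * K) + Kᵀ * R * K
          - (K - L)ᵀ * (R + Bᵀ * Q * B) * (K - L) := by rw [h2]; abel
    rw [this]
    simp only [transpose_sub, transpose_mul, transpose_transpose, Matrix.sub_mul,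
      Matrix.mul_sub, Matrix.add_mul, Matrix.mul_add, Matrix.mul_assoc]
    abel
  rw [key]
  have h1 : ((A - B * K)ᵀ * (P - Q) * (A - B * K)).PosSemidef := by
    simpa [conjTranspose_eq_transpose_of_trivial] using
      hPQ.conjTranspose_mul_mul_same (A - B * K)
  have h2 : ((K - L)ᵀ * (R + Bᵀ * Q * B) * (K - L)).PosSemidef := by
    simpa [conjTranspose_eq_transpose_of_trivial] using
      (M_posdef hR hQ).posSemidef.conjTranspose_mul_mul_same (K - L)
  exact h1.add h2

end helpers3

/-- Comparison principle for Riccati difference equations: if `P_{i+1}^j = R(P_i^j, S_i^j)`,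
with `P_0^1 ⪰ P_0^2 ⪰ 0` and `S_i^1 ⪰ S_i^2 ⪰ 0` for all `i`, then `P_i^1 ⪰ P_i^2` for all
`i ∈ ℕ`. -/
theorem stmt11 {n m : ℕ} (A : Matrix (Fin n) (Fin n) ℝ) (B : Matrix (Fin n) (Fin m) ℝ)
    {R : Matrix (Fin m) (Fin m) ℝ} (hR : R.PosDef)
    (P1 P2 S1 S2 : ℕ → Matrix (Fin n) (Fin n) ℝ)
    (hS1 : ∀ i, (S1 i).PosSemidef) (hS2 : ∀ i, (S2 i).PosSemidef)
    (hS : ∀ i, (S1 i - S2 i).PosSemidef)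
    (hP01 : (P1 0).PosSemidef) (hP02 : (P2 0).PosSemidef)
    (hP0 : (P1 0 - P2 0).PosSemidef)
    (hrec1 : ∀ i, P1 (i + 1) =
      Aᵀ * P1 i * A - Aᵀ * P1 i * B * (R + Bᵀ * P1 i * B)⁻¹ * Bᵀ * P1 i * A + S1 i)
    (hrec2 : ∀ i, P2 (i + 1) =
      Aᵀ * P2 i * A - Aᵀ * P2 i * B * (R + Bᵀ * P2 i * B)⁻¹ * Bᵀ * P2 i * A + S2 i) :
    ∀ i, (P1 i - P2 i).PosSemidef := by
  have main : ∀ i, (P2 i).PosSemidef ∧ (P1 i - P2 i).PosSemidef := by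
    intro i
    induction i with
    | zero => exact ⟨hP02, hP0⟩
    | succ i ih =>
      obtain ⟨h2, hd⟩ := ih
      have h1 : (P1 i).PosSemidef := by
        have := h2.add hd
        rwa [add_sub_cancel] at this
      constructor
      · rw [hrec2 i]
        exact (ricPSD A B hR h2).add (hS2 i)
      · have heq : P1 (i + 1) - P2 (i + 1)
            = ((Aᵀ * P1 i * A - Aᵀ * P1 i * B * (R + Bᵀ * P1 i * B)⁻¹ * Bᵀ * P1 i * A)
              - (Aᵀ * P2 i * A - Aᵀ * P2 i * B * (R + Bᵀ * P2 i * B)⁻¹ * Bᵀ * P2 i * A))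
              + (S1 i - S2 i) := by
          rw [hrec1 i, hrec2 i]; abel
        rw [heq]
        exact (ricMono A B hR h1 h2 hd).add (hS i)
  exact fun i => (main i).2
end

section
/- Robustness invariance of inexact value iteration: consider the perturbed Riccati recursion P̂_{i+1} = Aᵀ P̂_i A - Aᵀ P̂_i B (R + Bᵀ P̂_i B)^{-1} Bᵀ P̂_i A + S + Δ_i with P̂_0 symmetric positive semidefinite and symmetric disturbances Δ_i satisfying ‖Δ_i‖₂ < λ_min(S) for all i. Then P̂_i is symmetric positive semidefinite for all i ∈ ℕ. -/
open Matrix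
open scoped Matrix.Norms.L2Operator

/-- Eigenvalues of a real symmetric matrix are bounded by the L2 operator norm. -/
lemma aux_abs_eigenvalue_le {k : ℕ} {M : Matrix (Fin k) (Fin k) ℝ} (hM : M.IsHermitian)
    (i : Fin k) : |hM.eigenvalues i| ≤ ‖M‖ := by
  have hv := hM.mulVec_eigenvectorBasis i
  have h1 : ‖hM.eigenvectorBasis i‖ = 1 := hM.eigenvectorBasis.orthonormal.1 i
  have h2 := M.l2_opNorm_mulVec (hM.eigenvectorBasis i)
  erw [hv] at h2
  have h3 : ((EuclideanSpace.equiv (Fin k) ℝ).symm <|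
      hM.eigenvalues i • ⇑(hM.eigenvectorBasis i)) = hM.eigenvalues i • hM.eigenvectorBasis i := rfl
  rw [h3, norm_smul, h1] at h2
  simpa using h2

/-- A Hermitian real matrix plus a large enough multiple of the identity is PSD. -/
lemma aux_add_smul_one_posSemidef {k : ℕ} {M : Matrix (Fin k) (Fin k) ℝ}
    (hM : M.IsHermitian) (c : ℝ) (h : ∀ i, 0 ≤ hM.eigenvalues i + c) :
    (M + c • 1).PosSemidef := by
  have hU : (hM.eigenvectorUnitary : Matrix (Fin k) (Fin k) ℝ) *
      star (hM.eigenvectorUnitary : Matrix (Fin k) (Fin k) ℝ) = 1 :=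
    Matrix.mem_unitaryGroup_iff.mp hM.eigenvectorUnitary.2
  have key : M + c • 1 = (hM.eigenvectorUnitary : Matrix (Fin k) (Fin k) ℝ) *
      diagonal (fun i => hM.eigenvalues i + c) *
      star (hM.eigenvectorUnitary : Matrix (Fin k) (Fin k) ℝ) := by
    have hd : (diagonal (fun i => hM.eigenvalues i + c) : Matrix (Fin k) (Fin k) ℝ)
        = diagonal (RCLike.ofReal ∘ hM.eigenvalues) + c • 1 := by
      ext i j
      by_cases hij : i = j <;>
        simp [hij, Matrix.diagonal, Matrix.one_apply, Function.comp, Matrix.smul_apply]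
    rw [hd, Matrix.mul_add, Matrix.add_mul]
    congr 1
    · exact hM.spectral_theorem
    · rw [Matrix.mul_smul, Matrix.smul_mul, Matrix.mul_one, hU]
  rw [key, Matrix.star_eq_conjTranspose]
  exact (Matrix.posSemidef_diagonal_iff.mpr h).mul_mul_conjTranspose_same _

lemma aux_S_add_delta {k : ℕ} {S D : Matrix (Fin k) (Fin k) ℝ} (hS : S.PosDef)
    (hD : D.IsHermitian) (h : ‖D‖ < ⨅ j, hS.1.eigenvalues j) : (S + D).PosSemidef := by
  rcases Nat.eq_zero_or_pos k with hk | hk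
  · subst hk
    have : S + D = 0 := Subsingleton.elim _ _
    rw [this]
    exact Matrix.PosSemidef.zero
  · haveI : Nonempty (Fin k) := Fin.pos_iff_nonempty.mp hk
    set c := ⨅ j, hS.1.eigenvalues j with hc
    have hbdd : BddBelow (Set.range hS.1.eigenvalues) :=
      Set.Finite.bddBelow (Set.finite_range _)
    have h1 : (S + (-c) • 1).PosSemidef :=
      aux_add_smul_one_posSemidef hS.1 (-c) fun i => by
        have := ciInf_le hbdd i; linarith
    have h2 : (D + c • 1).PosSemidef :=
      aux_add_smul_one_posSemidef hD c fun i => by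
        have := abs_le.mp (aux_abs_eigenvalue_le hD i); linarith
    have key : S + D = (S + (-c) • 1) + (D + c • 1) := by
      rw [neg_smul]; abel
    rw [key]
    exact h1.add h2

open scoped MatrixOrder in
lemma aux_riccati_step {n m : ℕ} (A : Matrix (Fin n) (Fin n) ℝ) (B : Matrix (Fin n) (Fin m) ℝ)
    {R : Matrix (Fin m) (Fin m) ℝ} (hR : R.PosDef) {P : Matrix (Fin n) (Fin n) ℝ}
    (hP : P.PosSemidef) :
    (Aᵀ * P * A - Aᵀ * P * B * (R + Bᵀ * P * B)⁻¹ * Bᵀ * P * A).PosSemidef := by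
  set L := CFC.sqrt P with hLdef
  have hL : L * L = P := CFC.sqrt_mul_sqrt_self P hP.nonneg
  have hLH : Lᴴ = L := (CFC.sqrt_nonneg P).posSemidef.1
  set X := L * A with hX
  set Y := L * B with hY
  set N := CFC.sqrt R with hNdef
  have hN : Nᴴ * N = R := by
    rw [(CFC.sqrt_nonneg R).posSemidef.1]; exact CFC.sqrt_mul_sqrt_self R hR.posSemidef.nonneg
  have hNT : Nᵀ * N = R := by
    rw [← Matrix.conjTranspose_eq_transpose_of_trivial]; exact hN
  have hRY : (R + Yᴴ * Y).PosDef := hR.add_posSemidef (posSemidef_conjTranspose_mul_self Y)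
  haveI : Invertible (R + Yᴴ * Y) := hRY.isUnit.invertible
  have hblock : (fromBlocks (1 : Matrix (Fin n) (Fin n) ℝ) Y Yᴴ (R + Yᴴ * Y)).PosSemidef := by
    have e : fromBlocks (1 : Matrix (Fin n) (Fin n) ℝ) Y Yᴴ (R + Yᴴ * Y)
        = (fromBlocks 1 Y 0 0)ᴴ * (fromBlocks 1 Y 0 0)
          + (fromBlocks 0 0 0 N)ᴴ * (fromBlocks (0 : Matrix (Fin n) (Fin n) ℝ) 0 0 N) := by
      simp [Matrix.fromBlocks_transpose, Matrix.fromBlocks_conjTranspose, Matrix.fromBlocks_multiply,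
        Matrix.fromBlocks_add, hN, hNT, add_comm]
    rw [e]
    exact (posSemidef_conjTranspose_mul_self _).add (posSemidef_conjTranspose_mul_self _)
  have hmid : ((1 : Matrix (Fin n) (Fin n) ℝ) - Y * (R + Yᴴ * Y)⁻¹ * Yᴴ).PosSemidef :=
    (Matrix.PosDef.fromBlocks₂₂ _ _ hRY).mp hblock
  have hLT : Lᵀ = L := by
    rw [← Matrix.conjTranspose_eq_transpose_of_trivial]; exact hLH
  have key : Aᵀ * P * A - Aᵀ * P * B * (R + Bᵀ * P * B)⁻¹ * Bᵀ * P * A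
      = Xᴴ * ((1 : Matrix (Fin n) (Fin n) ℝ) - Y * (R + Yᴴ * Y)⁻¹ * Yᴴ) * X := by
    simp only [hX, hY, Matrix.conjTranspose_mul, hLH, Matrix.mul_sub, Matrix.sub_mul,
      Matrix.mul_one, ← hL, Matrix.conjTranspose_eq_transpose_of_trivial,
      Matrix.transpose_mul, hLT, Matrix.mul_assoc]
  rw [key]
  exact hmid.conjTranspose_mul_mul_same X


/-- Robustness invariance of inexact value iteration: if
`P̂_{i+1} = Aᵀ P̂_i A - Aᵀ P̂_i B (R + Bᵀ P̂_i B)⁻¹ Bᵀ P̂_i A + S + Δ_i` with `P̂_0 ⪰ 0`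
and symmetric disturbances satisfying `‖Δ_i‖₂ < λ_min(S)` for all `i`, then `P̂_i ⪰ 0`
for all `i ∈ ℕ`. -/
theorem stmt13 {n m : ℕ} (A : Matrix (Fin n) (Fin n) ℝ) (B : Matrix (Fin n) (Fin m) ℝ)
    {S : Matrix (Fin n) (Fin n) ℝ} {R : Matrix (Fin m) (Fin m) ℝ}
    (hS : S.PosDef) (hR : R.PosDef)
    (Phat : ℕ → Matrix (Fin n) (Fin n) ℝ) (Δ : ℕ → Matrix (Fin n) (Fin n) ℝ)
    (hΔsymm : ∀ i, (Δ i).IsHermitian)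
    (hΔ : ∀ i, ‖Δ i‖ < ⨅ j, hS.1.eigenvalues j)
    (hP0 : (Phat 0).PosSemidef)
    (hrec : ∀ i, Phat (i + 1) =
      Aᵀ * Phat i * A - Aᵀ * Phat i * B * (R + Bᵀ * Phat i * B)⁻¹ * Bᵀ * Phat i * A
        + S + Δ i) :
    ∀ i, (Phat i).PosSemidef := by
  intro i
  induction i with
  | zero => exact hP0
  | succ i ih =>
    rw [hrec i, add_assoc]
    exact (aux_riccati_step A B hR ih).add (aux_S_add_delta hS (hΔsymm i) (hΔ i))
end

section
/- Local exponential stability of exact value iteration: let P* be the unique positive definite solution of the DARE P = Aᵀ P A - Aᵀ P B (R + Bᵀ P B)^{-1} Bᵀ P A + S, with closed-loop matrix A* = A - B(R + Bᵀ P* B)^{-1} Bᵀ P* A satisfying ρ(A*) < 1. Fix θ ∈ (ρ(A*), 1), let C_θ ≥ 1 satisfy ‖(A*)^i‖₂ ≤ C_θ θ^i for all i, set ν = ‖A*‖₂² ‖B R^{-1} Bᵀ‖₂ and δ_θ = θ²(1-θ²)/(4 ν C_θ⁴). If the exact value iteration P_{i+1} = Aᵀ P_i A - Aᵀ P_i B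 (R + Bᵀ P_i B)^{-1} Bᵀ P_i A + S starts at P_0 ∈ 𝕊ⁿ₊ with ‖P_0 - P*‖₂ ≤ δ_θ, then ‖P_i - P*‖₂ ≤ 2 C_θ² θ^{2i} ‖P_0 - P*‖₂ for all i ∈ ℕ. -/
set_option maxHeartbeats 2000000
open Matrix
open scoped Matrix.Norms.L2Operator

lemma dotnorm (j : ℕ) (v : Fin j → ℝ) :
    ‖(WithLp.equiv 2 (Fin j → ℝ)).symm v‖ = Real.sqrt (v ⬝ᵥ v) := by
  rw [EuclideanSpace.norm_eq]
  congr 1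
  simp [dotProduct, Real.norm_eq_abs, sq_abs, sq]

lemma opnorm_le_of_quad {k l : ℕ} (C D : Matrix (Fin k) (Fin l) ℝ)
    (h : ∀ v : Fin l → ℝ, (C *ᵥ v) ⬝ᵥ (C *ᵥ v) ≤ (D *ᵥ v) ⬝ᵥ (D *ᵥ v)) : ‖C‖ ≤ ‖D‖ := by
  rw [l2_opNorm_def C]
  refine ContinuousLinearMap.opNorm_le_bound _ (norm_nonneg _) fun x => ?_
  set v : Fin l → ℝ := (WithLp.equiv 2 (Fin l → ℝ)) x with hv
  have hx : ((toEuclideanLin.trans LinearMap.toContinuousLinearMap) C) x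
      = (WithLp.equiv 2 (Fin k → ℝ)).symm (C *ᵥ v) := rfl
  have hD : (EuclideanSpace.equiv (Fin k) ℝ).symm (D *ᵥ v)
      = (WithLp.equiv 2 (Fin k → ℝ)).symm (D *ᵥ v) := rfl
  calc ‖((toEuclideanLin.trans LinearMap.toContinuousLinearMap) C) x‖
      = Real.sqrt ((C *ᵥ v) ⬝ᵥ (C *ᵥ v)) := by rw [hx, dotnorm]
    _ ≤ Real.sqrt ((D *ᵥ v) ⬝ᵥ (D *ᵥ v)) := Real.sqrt_le_sqrt (h v)
    _ = ‖(EuclideanSpace.equiv (Fin k) ℝ).symm (D *ᵥ v)‖ := by rw [hD, dotnorm]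
    _ ≤ ‖D‖ * ‖x‖ := D.l2_opNorm_mulVec x

lemma psd_quad_nonneg {k : ℕ} {Z : Matrix (Fin k) (Fin k) ℝ} (hZ : Z.PosSemidef)
    (v : Fin k → ℝ) : 0 ≤ v ⬝ᵥ (Z *ᵥ v) := by
  simpa using hZ.dotProduct_mulVec_nonneg v

lemma quad_factor {k l : ℕ} (C : Matrix (Fin l) (Fin k) ℝ) (v : Fin k → ℝ) :
    v ⬝ᵥ ((Cᴴ * C) *ᵥ v) = (C *ᵥ v) ⬝ᵥ (C *ᵥ v) := by
  rw [Matrix.conjTranspose_eq_transpose_of_trivial, ← Matrix.mulVec_mulVec,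
    Matrix.dotProduct_mulVec, Matrix.vecMul_transpose]

lemma psd_norm_mono {k : ℕ} {X Y : Matrix (Fin k) (Fin k) ℝ} (hX : X.PosSemidef)
    (hXY : (Y - X).PosSemidef) : ‖X‖ ≤ ‖Y‖ := by
  have hY : Y.PosSemidef := by simpa using hXY.add hX
  obtain ⟨C, hC⟩ : ∃ C : Matrix (Fin k) (Fin k) ℝ, X = Cᴴ * C := by
    open scoped MatrixOrder in
    obtain ⟨C, hC⟩ := CStarAlgebra.nonneg_iff_eq_star_mul_self.mp hX.nonneg
    exact ⟨C, hC⟩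
  obtain ⟨D, hD⟩ : ∃ D : Matrix (Fin k) (Fin k) ℝ, Y = Dᴴ * D := by
    open scoped MatrixOrder in
    obtain ⟨D, hD⟩ := CStarAlgebra.nonneg_iff_eq_star_mul_self.mp hY.nonneg
    exact ⟨D, hD⟩
  have hquad : ∀ v, (C *ᵥ v) ⬝ᵥ (C *ᵥ v) ≤ (D *ᵥ v) ⬝ᵥ (D *ᵥ v) := by
    intro v
    have h0 := psd_quad_nonneg hXY v
    rw [Matrix.sub_mulVec, dotProduct_sub, sub_nonneg, hC, hD, quad_factor, quad_factor] at h0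
    exact h0
  have hCD : ‖C‖ ≤ ‖D‖ := opnorm_le_of_quad C D hquad
  calc ‖X‖ = ‖C‖ * ‖C‖ := by rw [hC, Matrix.l2_opNorm_conjTranspose_mul_self]
    _ ≤ ‖D‖ * ‖D‖ := mul_le_mul hCD hCD (norm_nonneg _) (norm_nonneg _)
    _ = ‖Y‖ := by rw [hD, Matrix.l2_opNorm_conjTranspose_mul_self]

lemma inv_antitone {k : ℕ} {M N : Matrix (Fin k) (Fin k) ℝ} (hM : M.PosDef) (hN : N.PosDef)
    (hMN : (N - M).PosSemidef) : (M⁻¹ - N⁻¹).PosSemidef := by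
  have hMinv : (M⁻¹).PosDef := hM.inv
  have hNinv : (N⁻¹).PosDef := hN.inv
  refine .of_dotProduct_mulVec_nonneg (hMinv.isHermitian.sub hNinv.isHermitian) fun x => ?_
  simp only [star_trivial, Matrix.sub_mulVec, dotProduct_sub, sub_nonneg]
  set y : Fin k → ℝ := N⁻¹ *ᵥ x with hy
  set z : Fin k → ℝ := M⁻¹ *ᵥ x with hz
  have hMz : M *ᵥ z = x := by
    rw [hz, Matrix.mulVec_mulVec, Matrix.mul_nonsing_inv _ hM.det_pos.ne'.isUnit, Matrix.one_mulVec]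
  have hNy : N *ᵥ y = x := by
    rw [hy, Matrix.mulVec_mulVec, Matrix.mul_nonsing_inv _ hN.det_pos.ne'.isUnit, Matrix.one_mulVec]
  set t : ℝ := x ⬝ᵥ y with ht
  set d : ℝ := x ⬝ᵥ z with hd
  set a : ℝ := y ⬝ᵥ (M *ᵥ y) with ha
  -- t = y ⬝ᵥ (N *ᵥ y)
  have htN : t = y ⬝ᵥ (N *ᵥ y) := by rw [hNy, dotProduct_comm, ht]
  have hat : a ≤ t := by
    have := psd_quad_nonneg hMN y
    rw [Matrix.sub_mulVec, dotProduct_sub, sub_nonneg] at this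
    rw [htN]; exact this
  have ha0 : 0 ≤ a := psd_quad_nonneg hM.posSemidef y
  have ht0 : 0 ≤ t := by rw [htN]; exact psd_quad_nonneg hN.posSemidef y
  have hd0 : 0 ≤ d := by
    have := psd_quad_nonneg hMinv.posSemidef x
    rwa [← hz, ← hd] at this
  -- Cauchy-Schwarz via discriminant: ∀ c, 0 ≤ d*c² - 2t*c + a
  have hMsymm : Mᵀ = M := by
    have := hM.isHermitian
    rwa [Matrix.IsHermitian, Matrix.conjTranspose_eq_transpose_of_trivial] at this
  have hzMy : z ⬝ᵥ (M *ᵥ y) = t := by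
    rw [Matrix.dotProduct_mulVec, ← Matrix.mulVec_transpose, hMsymm, hMz, ht, dotProduct_comm]
  have hyMz : y ⬝ᵥ (M *ᵥ z) = t := by rw [hMz, ht, dotProduct_comm]
  have hzMz : z ⬝ᵥ (M *ᵥ z) = d := by rw [hMz, hd, dotProduct_comm]
  have hdisc : ∀ c : ℝ, 0 ≤ d * (c * c) + (-(2*t)) * c + a := by
    intro c
    have h0 := psd_quad_nonneg hM.posSemidef (c • z - y)
    simp only [Matrix.mulVec_sub, Matrix.mulVec_smul, dotProduct_sub, sub_dotProduct,
      dotProduct_smul, smul_dotProduct, smul_eq_mul] at h0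
    rw [hzMz, hyMz, hzMy, ← ha] at h0
    nlinarith [h0]
  have hts : t * t ≤ a * d := by
    have := discrim_le_zero hdisc
    rw [discrim] at this
    nlinarith
  -- conclude t ≤ d
  rcases eq_or_lt_of_le ht0 with h | h
  · exact h ▸ hd0
  · nlinarith

lemma cos {n m : ℕ} (A X S : Matrix (Fin n) (Fin n) ℝ) (B : Matrix (Fin n) (Fin m) ℝ)
    (R V : Matrix (Fin m) (Fin m) ℝ)
    (hX : Xᵀ = X) (hRs : Rᵀ = R) (hVs : Vᵀ = V)
    (hWV : (R + Bᵀ * X * B) * V = 1) :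
    Aᵀ * X * A - Aᵀ * X * B * V * Bᵀ * X * A + S
      = (A - B * (V * Bᵀ * X * A))ᵀ * X * (A - B * (V * Bᵀ * X * A))
        + (V * Bᵀ * X * A)ᵀ * R * (V * Bᵀ * X * A) + S := by
  have hWK : R * (V * (Bᵀ * (X * A))) + Bᵀ * (X * (B * (V * (Bᵀ * (X * A)))))
      = Bᵀ * (X * A) := by
    have := congrArg (· * (Bᵀ * (X * A))) hWV
    simpa only [Matrix.add_mul, Matrix.mul_assoc, Matrix.one_mul] using this
  have hKt : (V * (Bᵀ * (X * A)))ᵀ = Aᵀ * (X * (B * V)) := by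
    simp only [Matrix.transpose_mul, Matrix.transpose_transpose, hX, hVs, Matrix.mul_assoc]
  simp only [Matrix.mul_assoc] at *
  set K : Matrix (Fin m) (Fin n) ℝ := V * (Bᵀ * (X * A)) with hKdef
  simp only [Matrix.transpose_sub, Matrix.mul_sub, Matrix.sub_mul, Matrix.mul_add,
    Matrix.add_mul, hKt, Matrix.mul_assoc]
  simp only [Matrix.transpose_mul, hKt, Matrix.mul_assoc]
  rw [← hKdef]
  have hcomb : Aᵀ * (X * (B * (V * (Bᵀ * (X * (B * K)))))) + Aᵀ * (X * (B * (V * (R * K))))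
      = Aᵀ * (X * (B * K)) := by
    simp only [← Matrix.mul_add]
    rw [add_comm (Bᵀ * (X * (B * K))) (R * K), hWK, ← hKdef]
  rw [← hcomb]
  abel

lemma key_identity {n m : ℕ} (A X Q S : Matrix (Fin n) (Fin n) ℝ) (B : Matrix (Fin n) (Fin m) ℝ)
    (R VX VQ : Matrix (Fin m) (Fin m) ℝ)
    (hQ : Qᵀ = Q) (hVQs : VQᵀ = VQ)
    (hWVX : (R + Bᵀ * X * B) * VX = 1) (hVXW : VX * (R + Bᵀ * X * B) = 1)
    (hWVQ : (R + Bᵀ * Q * B) * VQ = 1) (hVQW : VQ * (R + Bᵀ * Q * B) = 1) :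
    (Aᵀ * X * A - Aᵀ * X * B * VX * Bᵀ * X * A + S)
      - (Aᵀ * Q * A - Aᵀ * Q * B * VQ * Bᵀ * Q * A + S)
    = (A - B * (VQ * Bᵀ * Q * A))ᵀ * (X - Q) * (A - B * (VQ * Bᵀ * Q * A))
      - (A - B * (VQ * Bᵀ * Q * A))ᵀ * (X - Q) * B * VX * Bᵀ * (X - Q)
          * (A - B * (VQ * Bᵀ * Q * A)) := by
  have hWK : R * (VX * (Bᵀ * (X * A))) + Bᵀ * (X * (B * (VX * (Bᵀ * (X * A)))))
      = Bᵀ * (X * A) := by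
    have := congrArg (· * (Bᵀ * (X * A))) hWVX
    simpa only [Matrix.add_mul, Matrix.mul_assoc, Matrix.one_mul] using this
  have hWL : R * (VQ * (Bᵀ * (Q * A))) + Bᵀ * (Q * (B * (VQ * (Bᵀ * (Q * A)))))
      = Bᵀ * (Q * A) := by
    have := congrArg (· * (Bᵀ * (Q * A))) hWVQ
    simpa only [Matrix.add_mul, Matrix.mul_assoc, Matrix.one_mul] using this
  have hLt : (VQ * (Bᵀ * (Q * A)))ᵀ = Aᵀ * (Q * (B * VQ)) := by
    simp only [Matrix.transpose_mul, Matrix.transpose_transpose, hQ, hVQs, Matrix.mul_assoc]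
  simp only [Matrix.mul_assoc] at hWVX hVXW hWVQ hVQW ⊢
  set K : Matrix (Fin m) (Fin n) ℝ := VX * (Bᵀ * (X * A)) with hKdef
  set L : Matrix (Fin m) (Fin n) ℝ := VQ * (Bᵀ * (Q * A)) with hLdef
  have e1 : Bᵀ * (X * (B * K)) = Bᵀ * (X * A) - R * K := by rw [← hWK]; abel
  have e2 : Bᵀ * (Q * (B * L)) = Bᵀ * (Q * A) - R * L := by rw [← hWL]; abel
  have hWdelta : R * (K - L) + Bᵀ * (X * (B * (K - L))) = Bᵀ * ((X - Q) * (A - B * L)) := by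
    simp only [Matrix.mul_sub, Matrix.sub_mul, e1, e2]
    abel
  have hDelta : VX * (Bᵀ * ((X - Q) * (A - B * L))) = K - L := by
    rw [← hWdelta]
    rw [show R * (K - L) + Bᵀ * (X * (B * (K - L))) = (R + Bᵀ * (X * B)) * (K - L) by
      rw [Matrix.add_mul, Matrix.mul_assoc, Matrix.mul_assoc]]
    rw [← Matrix.mul_assoc, hVXW, Matrix.one_mul]
  have h5 : Bᵀ * ((X - Q) * (A - B * K)) = R * (K - L) + Bᵀ * (Q * (B * (K - L))) := by
    simp only [Matrix.mul_sub, Matrix.sub_mul, e1, e2]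
    abel
  have h6 : Lᵀ * (R * (K - L) + Bᵀ * (Q * (B * (K - L)))) = Aᵀ * (Q * (B * (K - L))) := by
    rw [show R * (K - L) + Bᵀ * (Q * (B * (K - L))) = (R + Bᵀ * (Q * B)) * (K - L) by
      rw [Matrix.add_mul, Matrix.mul_assoc, Matrix.mul_assoc]]
    rw [hLt]
    simp only [Matrix.mul_assoc]
    rw [← Matrix.mul_assoc VQ, hVQW, Matrix.one_mul]
  have hRHS : (A - B * L)ᵀ * ((X - Q) * (A - B * L))
      - (A - B * L)ᵀ * ((X - Q) * (B * (VX * (Bᵀ * ((X - Q) * (A - B * L))))))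
      = Aᵀ * ((X - Q) * (A - B * K)) - Aᵀ * (Q * (B * (K - L))) := by
    rw [hDelta, ← Matrix.mul_sub, ← Matrix.mul_sub]
    rw [show A - B * L - B * (K - L) = A - B * K by rw [Matrix.mul_sub]; abel]
    rw [Matrix.transpose_sub, Matrix.transpose_mul, Matrix.sub_mul, Matrix.mul_assoc, h5, h6]
  rw [hRHS]
  simp only [Matrix.mul_sub, Matrix.sub_mul]
  abel

lemma norm3 {a b c d : ℕ} (X : Matrix (Fin a) (Fin b) ℝ) (Y : Matrix (Fin b) (Fin c) ℝ)
    (Z : Matrix (Fin c) (Fin d) ℝ) : ‖X * Y * Z‖ ≤ ‖X‖ * ‖Y‖ * ‖Z‖ :=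
  (Matrix.l2_opNorm_mul _ _).trans
    (mul_le_mul_of_nonneg_right (Matrix.l2_opNorm_mul _ _) (norm_nonneg _))


/-- Local exponential stability of exact value iteration for the DARE. If `P*` solves the
DARE with Schur-stable closed loop `A* = A - B (R + Bᵀ P* B)⁻¹ Bᵀ P* A`, `θ ∈ (ρ(A*), 1)`,
`C_θ ≥ 1` satisfies `‖(A*)^i‖ ≤ C_θ θ^i`, `ν = ‖A*‖² ‖B R⁻¹ Bᵀ‖`,
`δ_θ = θ²(1-θ²)/(4 ν C_θ⁴)`, and the exact value iteration starts at a positive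
semidefinite `P 0` with `‖P 0 - P*‖ ≤ δ_θ`, then
`‖P i - P*‖ ≤ 2 C_θ² θ^(2i) ‖P 0 - P*‖` for all `i`. -/
theorem stmt15 {n m : ℕ} (A : Matrix (Fin n) (Fin n) ℝ) (B : Matrix (Fin n) (Fin m) ℝ)
    {S : Matrix (Fin n) (Fin n) ℝ} {R : Matrix (Fin m) (Fin m) ℝ}
    (hS : S.PosDef) (hR : R.PosDef)
    (Pstar : Matrix (Fin n) (Fin n) ℝ) (hPstar : Pstar.PosDef)
    (hDARE : Pstar =
      Aᵀ * Pstar * A - Aᵀ * Pstar * B * (R + Bᵀ * Pstar * B)⁻¹ * Bᵀ * Pstar * A + S)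
    (θ Cθ : ℝ)
    (hρθ : spectralRadius ℂ
        ((A - B * ((R + Bᵀ * Pstar * B)⁻¹ * Bᵀ * Pstar * A)).map Complex.ofReal)
        < ENNReal.ofReal θ)
    (hθ1 : θ < 1) (hθ0 : 0 < θ) (hC : 1 ≤ Cθ)
    (hCθ : ∀ i : ℕ,
      ‖(A - B * ((R + Bᵀ * Pstar * B)⁻¹ * Bᵀ * Pstar * A)) ^ i‖ ≤ Cθ * θ ^ i)
    (P : ℕ → Matrix (Fin n) (Fin n) ℝ) (hP0 : (P 0).PosSemidef)
    (hrec : ∀ i, P (i + 1) =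
      Aᵀ * P i * A - Aᵀ * P i * B * (R + Bᵀ * P i * B)⁻¹ * Bᵀ * P i * A + S)
    (hinit : ‖P 0 - Pstar‖ ≤
      θ ^ 2 * (1 - θ ^ 2) /
        (4 * (‖A - B * ((R + Bᵀ * Pstar * B)⁻¹ * Bᵀ * Pstar * A)‖ ^ 2 *
          ‖B * R⁻¹ * Bᵀ‖) * Cθ ^ 4)) :
    ∀ i : ℕ, ‖P i - Pstar‖ ≤ 2 * Cθ ^ 2 * θ ^ (2 * i) * ‖P 0 - Pstar‖ := by
  -- transpose norm helper
  have nT : ∀ {a b : ℕ} (M : Matrix (Fin a) (Fin b) ℝ), ‖Mᵀ‖ = ‖M‖ := by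
    intro a b M
    rw [← Matrix.conjTranspose_eq_transpose_of_trivial, Matrix.l2_opNorm_conjTranspose]
  -- basic symmetry facts
  have hRt : Rᵀ = R := by
    have := hR.isHermitian
    rwa [Matrix.IsHermitian, Matrix.conjTranspose_eq_transpose_of_trivial] at this
  -- W facts for a psd matrix
  have hW : ∀ {X : Matrix (Fin n) (Fin n) ℝ}, X.PosSemidef → (R + Bᵀ * X * B).PosDef := by
    intro X hX
    have : (Bᵀ * X * B).PosSemidef := by
      have := hX.conjTranspose_mul_mul_same B
      rwa [Matrix.conjTranspose_eq_transpose_of_trivial] at this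
    exact hR.add_posSemidef this
  have hXt : ∀ {X : Matrix (Fin n) (Fin n) ℝ}, X.PosSemidef → Xᵀ = X := by
    intro X hX
    have := hX.isHermitian
    rwa [Matrix.IsHermitian, Matrix.conjTranspose_eq_transpose_of_trivial] at this
  have hWV : ∀ {X : Matrix (Fin n) (Fin n) ℝ}, X.PosSemidef →
      (R + Bᵀ * X * B) * (R + Bᵀ * X * B)⁻¹ = 1 := by
    intro X hX
    exact Matrix.mul_nonsing_inv _ (hW hX).det_pos.ne'.isUnit
  have hVW : ∀ {X : Matrix (Fin n) (Fin n) ℝ}, X.PosSemidef →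
      (R + Bᵀ * X * B)⁻¹ * (R + Bᵀ * X * B) = 1 := by
    intro X hX
    exact Matrix.nonsing_inv_mul _ (hW hX).det_pos.ne'.isUnit
  have hVt : ∀ {X : Matrix (Fin n) (Fin n) ℝ}, X.PosSemidef →
      ((R + Bᵀ * X * B)⁻¹)ᵀ = (R + Bᵀ * X * B)⁻¹ := by
    intro X hX
    rw [Matrix.transpose_nonsing_inv]
    congr 1
    rw [Matrix.transpose_add, hRt, Matrix.transpose_mul, Matrix.transpose_mul,
      Matrix.transpose_transpose, hXt hX, ← Matrix.mul_assoc]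
  -- all iterates are psd
  have hPsd : ∀ i, (P i).PosSemidef := by
    intro i
    induction i with
    | zero => exact hP0
    | succ i ih =>
      rw [hrec i, cos A (P i) S B R ((R + Bᵀ * P i * B)⁻¹) (hXt ih) hRt (hVt ih) (hWV ih)]
      set K := (R + Bᵀ * P i * B)⁻¹ * Bᵀ * P i * A with hK
      have h1 : ((A - B * K)ᵀ * P i * (A - B * K)).PosSemidef := by
        have := ih.conjTranspose_mul_mul_same (A - B * K)
        rwa [Matrix.conjTranspose_eq_transpose_of_trivial] at this
      have h2 : (Kᵀ * R * K).PosSemidef := by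
        have := hR.posSemidef.conjTranspose_mul_mul_same K
        rwa [Matrix.conjTranspose_eq_transpose_of_trivial] at this
      exact (h1.add h2).add hS.posSemidef
  -- the one-step error identity
  set Astar : Matrix (Fin n) (Fin n) ℝ :=
    A - B * ((R + Bᵀ * Pstar * B)⁻¹ * Bᵀ * Pstar * A) with hAstar
  set Gm : ℕ → Matrix (Fin n) (Fin n) ℝ := fun j =>
    Astarᵀ * (P j - Pstar) * B * (R + Bᵀ * P j * B)⁻¹ * Bᵀ * (P j - Pstar) * Astar with hGm
  have hstep : ∀ i, P (i + 1) - Pstar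
      = Astarᵀ * (P i - Pstar) * Astar - Gm i := by
    intro i
    rw [hrec i]
    conv_lhs => rw [hDARE]
    exact key_identity A (P i) Pstar S B R ((R + Bᵀ * P i * B)⁻¹) ((R + Bᵀ * Pstar * B)⁻¹)
      (hXt hPstar.posSemidef) (hVt hPstar.posSemidef)
      (hWV (hPsd i)) (hVW (hPsd i)) (hWV hPstar.posSemidef) (hVW hPstar.posSemidef)
  -- closed form
  have hclosed : ∀ i, P i - Pstar = (Astarᵀ) ^ i * (P 0 - Pstar) * Astar ^ i
      - ∑ k ∈ Finset.range i, (Astarᵀ) ^ k * Gm (i - 1 - k) * Astar ^ k := by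
    intro i
    induction i with
    | zero => simp
    | succ i ih =>
      rw [hstep i, ih]
      rw [Finset.sum_range_succ' (fun k => (Astarᵀ) ^ k * Gm (i + 1 - 1 - k) * Astar ^ k)]
      simp only [pow_zero, one_mul, mul_one, Nat.add_sub_cancel]
      rw [Matrix.mul_sub Astarᵀ ((Astarᵀ) ^ i * (P 0 - Pstar) * Astar ^ i)
        (∑ k ∈ Finset.range i, (Astarᵀ) ^ k * Gm (i - 1 - k) * Astar ^ k)]
      rw [Matrix.sub_mul (Astarᵀ * ((Astarᵀ) ^ i * (P 0 - Pstar) * Astar ^ i))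
        (Astarᵀ * ∑ k ∈ Finset.range i, (Astarᵀ) ^ k * Gm (i - 1 - k) * Astar ^ k) Astar]
      rw [Finset.mul_sum, Finset.sum_mul]
      have eq1 : Astarᵀ * ((Astarᵀ) ^ i * (P 0 - Pstar) * Astar ^ i) * Astar
          = (Astarᵀ) ^ (i + 1) * (P 0 - Pstar) * Astar ^ (i + 1) := by
        rw [pow_succ' (Astarᵀ), pow_succ Astar]
        simp only [Matrix.mul_assoc]
      have hsum : ∑ k ∈ Finset.range i,
            Astarᵀ * ((Astarᵀ) ^ k * Gm (i - 1 - k) * Astar ^ k) * Astar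
          = ∑ k ∈ Finset.range i, (Astarᵀ) ^ (k + 1) * Gm (i - (k + 1)) * Astar ^ (k + 1) := by
        refine Finset.sum_congr rfl fun k _ => ?_
        have hik : i - (k + 1) = i - 1 - k := by omega
        rw [hik, pow_succ' (Astarᵀ), pow_succ Astar]
        simp only [Matrix.mul_assoc]
      rw [eq1, hsum]
      abel
  -- bound on ‖Gm j‖
  have hCθ0 : (0:ℝ) < Cθ := lt_of_lt_of_le one_pos hC
  have hGn : ∀ j, ‖Gm j‖ ≤ (‖Astar‖ ^ 2 * ‖B * R⁻¹ * Bᵀ‖) * ‖P j - Pstar‖ ^ 2 := by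
    intro j
    have hWj := hW (hPsd j)
    have hM : ‖B * (R + Bᵀ * P j * B)⁻¹ * Bᵀ‖ ≤ ‖B * R⁻¹ * Bᵀ‖ := by
      have hinvpsd : ((R + Bᵀ * P j * B)⁻¹).PosSemidef := hWj.inv.posSemidef
      have h1 : (B * (R + Bᵀ * P j * B)⁻¹ * Bᵀ).PosSemidef := by
        have := hinvpsd.mul_mul_conjTranspose_same B
        rwa [Matrix.conjTranspose_eq_transpose_of_trivial] at this
      have hBPB : (Bᵀ * P j * B).PosSemidef := by
        have := (hPsd j).conjTranspose_mul_mul_same B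
        rwa [Matrix.conjTranspose_eq_transpose_of_trivial] at this
      have hanti := inv_antitone hR hWj (by
        have hx : R + Bᵀ * P j * B - R = Bᵀ * P j * B := by abel
        rw [hx]; exact hBPB)
      have h2 : (B * R⁻¹ * Bᵀ - B * (R + Bᵀ * P j * B)⁻¹ * Bᵀ).PosSemidef := by
        have := hanti.mul_mul_conjTranspose_same B
        rw [Matrix.conjTranspose_eq_transpose_of_trivial] at this
        rwa [Matrix.mul_sub, Matrix.sub_mul] at this
      exact psd_norm_mono h1 h2
    have hre : Gm j = (Astarᵀ * (P j - Pstar))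
        * (B * (R + Bᵀ * P j * B)⁻¹ * Bᵀ) * ((P j - Pstar) * Astar) := by
      show Astarᵀ * (P j - Pstar) * B * (R + Bᵀ * P j * B)⁻¹ * Bᵀ * (P j - Pstar) * Astar = _
      simp only [Matrix.mul_assoc]
    calc ‖Gm j‖ ≤ ‖Astarᵀ * (P j - Pstar)‖ * ‖B * (R + Bᵀ * P j * B)⁻¹ * Bᵀ‖
          * ‖(P j - Pstar) * Astar‖ := by rw [hre]; exact norm3 _ _ _
      _ ≤ (‖Astar‖ * ‖P j - Pstar‖) * ‖B * R⁻¹ * Bᵀ‖ * (‖P j - Pstar‖ * ‖Astar‖) := by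
          have e1 : ‖Astarᵀ * (P j - Pstar)‖ ≤ ‖Astar‖ * ‖P j - Pstar‖ := by
            have := Matrix.l2_opNorm_mul Astarᵀ (P j - Pstar)
            rwa [nT] at this
          have e2 := Matrix.l2_opNorm_mul (P j - Pstar) Astar
          have n2 : (0:ℝ) ≤ ‖B * (R + Bᵀ * P j * B)⁻¹ * Bᵀ‖ := norm_nonneg _
          have n3 : (0:ℝ) ≤ ‖Astar‖ * ‖P j - Pstar‖ :=
            mul_nonneg (norm_nonneg _) (norm_nonneg _)
          exact mul_le_mul (mul_le_mul e1 hM n2 n3) e2 (norm_nonneg _)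
            (mul_nonneg n3 (norm_nonneg _))
      _ = (‖Astar‖ ^ 2 * ‖B * R⁻¹ * Bᵀ‖) * ‖P j - Pstar‖ ^ 2 := by ring
  -- norm bound from closed form
  have hnormbound : ∀ i, ‖P i - Pstar‖ ≤ Cθ ^ 2 * θ ^ (2 * i) * ‖P 0 - Pstar‖
      + ∑ k ∈ Finset.range i, (Cθ * θ ^ k) ^ 2 * ‖Gm (i - 1 - k)‖ := by
    intro i
    have hpowT : ∀ k : ℕ, ‖(Astarᵀ) ^ k‖ ≤ Cθ * θ ^ k := by
      intro k
      rw [← Matrix.transpose_pow, nT]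
      exact hCθ k
    rw [hclosed i]
    refine (norm_sub_le _ _).trans ?_
    have hfst : ‖(Astarᵀ) ^ i * (P 0 - Pstar) * Astar ^ i‖
        ≤ Cθ ^ 2 * θ ^ (2 * i) * ‖P 0 - Pstar‖ := by
      refine (norm3 _ _ _).trans ?_
      have hb : (0:ℝ) ≤ Cθ * θ ^ i := mul_nonneg hCθ0.le (pow_nonneg hθ0.le _)
      have := mul_le_mul (mul_le_mul (hpowT i) (le_refl ‖P 0 - Pstar‖) (norm_nonneg _)
        hb) (hCθ i) (norm_nonneg _) (mul_nonneg hb (norm_nonneg _))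
      refine this.trans (le_of_eq ?_)
      rw [two_mul, pow_add]; ring
    have hsnd : ‖∑ k ∈ Finset.range i, (Astarᵀ) ^ k * Gm (i - 1 - k) * Astar ^ k‖
        ≤ ∑ k ∈ Finset.range i, (Cθ * θ ^ k) ^ 2 * ‖Gm (i - 1 - k)‖ := by
      refine (norm_sum_le _ _).trans (Finset.sum_le_sum fun k _ => ?_)
      refine (norm3 _ _ _).trans ?_
      have hb : (0:ℝ) ≤ Cθ * θ ^ k := mul_nonneg hCθ0.le (pow_nonneg hθ0.le _)
      have := mul_le_mul (mul_le_mul (hpowT k) (le_refl ‖Gm (i - 1 - k)‖) (norm_nonneg _)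
        hb) (hCθ k) (norm_nonneg _) (mul_nonneg hb (norm_nonneg _))
      refine this.trans (le_of_eq ?_)
      ring
    linarith
  -- case split on ‖P 0 - Pstar‖ = 0 or ν = 0
  by_cases hz : ‖P 0 - Pstar‖ = 0
  · have hP0star : P 0 = Pstar := by
      have := norm_eq_zero.mp hz
      exact sub_eq_zero.mp this
    have hall : ∀ i, P i = Pstar := by
      intro i
      induction i with
      | zero => exact hP0star
      | succ i ih => rw [hrec i, ih, ← hDARE]
    intro i
    rw [hall i, hz]
    simp
  -- now ‖P 0 - Pstar‖ > 0, so ν > 0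
  have he0 : 0 < ‖P 0 - Pstar‖ := lt_of_le_of_ne (norm_nonneg _) (Ne.symm hz)
  have hν : 0 < ‖Astar‖ ^ 2 * ‖B * R⁻¹ * Bᵀ‖ := by
    rcases lt_or_eq_of_le (mul_nonneg (sq_nonneg ‖Astar‖) (norm_nonneg (B * R⁻¹ * Bᵀ))) with h | h
    · exact h
    · exfalso
      rw [← h] at hinit
      simp only [mul_zero, zero_mul, div_zero] at hinit
      exact absurd (le_antisymm hinit (norm_nonneg _)) hz
  set ν : ℝ := ‖Astar‖ ^ 2 * ‖B * R⁻¹ * Bᵀ‖ with hνdef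
  set c : ℝ := ‖P 0 - Pstar‖ with hcdef
  -- key smallness: 4 * ν * Cθ^4 * c ≤ θ^2 * (1 - θ^2)
  have hsmall : 4 * ν * Cθ ^ 4 * c ≤ θ ^ 2 * (1 - θ ^ 2) := by
    have hd : (0:ℝ) < 4 * ν * Cθ ^ 4 :=
      mul_pos (mul_pos four_pos hν) (pow_pos hCθ0 4)
    have h2 := (le_div_iff₀ hd).mp hinit
    nlinarith [h2]
  intro i
  induction i using Nat.strong_induction_on with
  | _ i IH =>
    rcases Nat.eq_zero_or_pos i with rfl | hi
    · have h1 : (1:ℝ) ≤ 2 * Cθ ^ 2 := by nlinarith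
      calc c ≤ (2 * Cθ ^ 2) * c := by nlinarith [he0, h1]
        _ = 2 * Cθ ^ 2 * θ ^ (2 * 0) * c := by norm_num
    · have hbound := hnormbound i
      have h1θ : (0:ℝ) < 1 - θ ^ 2 := by nlinarith
      have hsum2 : ∑ k ∈ Finset.range i, (Cθ * θ ^ k) ^ 2 * ‖Gm (i - 1 - k)‖
          ≤ Cθ ^ 2 * θ ^ (2 * i) * c := by
        have hterm : ∀ k ∈ Finset.range i, (Cθ * θ ^ k) ^ 2 * ‖Gm (i - 1 - k)‖
            ≤ (4 * ν * Cθ ^ 6 * c ^ 2 * θ ^ (2 * (i - 1)))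
              * θ ^ (2 * (i - 1 - k)) := by
          intro k hk
          have hk' : k < i := Finset.mem_range.mp hk
          have hj : i - 1 - k < i := by omega
          have hIH := IH (i - 1 - k) hj
          have hE0 : (0:ℝ) ≤ ‖P (i - 1 - k) - Pstar‖ := norm_nonneg _
          have hsq : ‖P (i - 1 - k) - Pstar‖ ^ 2
              ≤ (2 * Cθ ^ 2 * θ ^ (2 * (i - 1 - k)) * c) ^ 2 :=
            pow_le_pow_left₀ hE0 hIH 2
          have hGj2 : ‖Gm (i - 1 - k)‖
              ≤ ν * (2 * Cθ ^ 2 * θ ^ (2 * (i - 1 - k)) * c) ^ 2 :=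
            (hGn (i - 1 - k)).trans (mul_le_mul_of_nonneg_left hsq hν.le)
          calc (Cθ * θ ^ k) ^ 2 * ‖Gm (i - 1 - k)‖
              ≤ (Cθ * θ ^ k) ^ 2 * (ν * (2 * Cθ ^ 2 * θ ^ (2 * (i - 1 - k)) * c) ^ 2) :=
                mul_le_mul_of_nonneg_left hGj2 (sq_nonneg _)
            _ = (4 * ν * Cθ ^ 6 * c ^ 2)
                  * (θ ^ k * θ ^ k * (θ ^ (2 * (i - 1 - k)) * θ ^ (2 * (i - 1 - k)))) := by
                ring
            _ = (4 * ν * Cθ ^ 6 * c ^ 2)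
                  * (θ ^ (2 * (i - 1)) * θ ^ (2 * (i - 1 - k))) := by
                rw [← pow_add, ← pow_add, ← pow_add, ← pow_add]
                have hexp : k + k + (2 * (i - 1 - k) + 2 * (i - 1 - k))
                    = 2 * (i - 1) + 2 * (i - 1 - k) := by omega
                rw [hexp]
            _ = (4 * ν * Cθ ^ 6 * c ^ 2 * θ ^ (2 * (i - 1))) * θ ^ (2 * (i - 1 - k)) := by
                ring
        have hD0 : (0:ℝ) ≤ 4 * ν * Cθ ^ 6 * c ^ 2 * θ ^ (2 * (i - 1)) :=
          mul_nonneg (mul_nonneg (mul_nonneg (mul_nonneg four_pos.le hν.le)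
            (pow_nonneg hCθ0.le 6)) (sq_nonneg c)) (pow_nonneg hθ0.le _)
        have hgeo : ∑ k ∈ Finset.range i, θ ^ (2 * (i - 1 - k)) ≤ 1 / (1 - θ ^ 2) := by
          rw [Finset.sum_range_reflect (fun j => θ ^ (2 * j)) i]
          have hsg : ∑ j ∈ Finset.range i, (θ ^ 2) ^ j ≤ 1 / (1 - θ ^ 2) := by
            rw [le_div_iff₀ h1θ]
            have h := geom_sum_mul (θ ^ 2) i
            have hp : (0:ℝ) ≤ (θ ^ 2) ^ i := pow_nonneg (sq_nonneg θ) i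
            nlinarith [h, hp]
          simpa [pow_mul] using hsg
        calc ∑ k ∈ Finset.range i, (Cθ * θ ^ k) ^ 2 * ‖Gm (i - 1 - k)‖
            ≤ ∑ k ∈ Finset.range i, (4 * ν * Cθ ^ 6 * c ^ 2 * θ ^ (2 * (i - 1)))
                * θ ^ (2 * (i - 1 - k)) := Finset.sum_le_sum hterm
          _ = (4 * ν * Cθ ^ 6 * c ^ 2 * θ ^ (2 * (i - 1)))
                * ∑ k ∈ Finset.range i, θ ^ (2 * (i - 1 - k)) := by
              rw [Finset.mul_sum]
          _ ≤ (4 * ν * Cθ ^ 6 * c ^ 2 * θ ^ (2 * (i - 1))) * (1 / (1 - θ ^ 2)) :=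
              mul_le_mul_of_nonneg_left hgeo hD0
          _ ≤ Cθ ^ 2 * θ ^ (2 * i) * c := by
              rw [mul_one_div, div_le_iff₀ h1θ]
              have hpow : θ ^ 2 * θ ^ (2 * (i - 1)) = θ ^ (2 * i) := by
                rw [← pow_add]
                congr 1
                omega
              have hnn : (0:ℝ) ≤ Cθ ^ 2 * c * θ ^ (2 * (i - 1)) :=
                mul_nonneg (mul_nonneg (pow_nonneg hCθ0.le 2) he0.le)
                  (pow_nonneg hθ0.le _)
              have hmul := mul_le_mul_of_nonneg_right hsmall hnn
              calc 4 * ν * Cθ ^ 6 * c ^ 2 * θ ^ (2 * (i - 1))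
                  = (4 * ν * Cθ ^ 4 * c) * (Cθ ^ 2 * c * θ ^ (2 * (i - 1))) := by ring
                _ ≤ (θ ^ 2 * (1 - θ ^ 2)) * (Cθ ^ 2 * c * θ ^ (2 * (i - 1))) := hmul
                _ = Cθ ^ 2 * c * (1 - θ ^ 2) * (θ ^ 2 * θ ^ (2 * (i - 1))) := by ring
                _ = Cθ ^ 2 * θ ^ (2 * i) * c * (1 - θ ^ 2) := by rw [hpow]; ring
      calc ‖P i - Pstar‖
          ≤ Cθ ^ 2 * θ ^ (2 * i) * c
            + ∑ k ∈ Finset.range i, (Cθ * θ ^ k) ^ 2 * ‖Gm (i - 1 - k)‖ := hbound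
        _ ≤ Cθ ^ 2 * θ ^ (2 * i) * c + Cθ ^ 2 * θ ^ (2 * i) * c := by linarith [hsum2]
        _ = 2 * Cθ ^ 2 * θ ^ (2 * i) * c := by ring
end
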